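/- arXiv:1503.02208 — 5 statements merged into one kernel-verified Lean document; each statement's English description precedes it below -/
import Mathlib

section
/- A regular left ideal with n quotients has at most 2^{n-1} + 1 atoms. -/
/-- Left quotient of a language by a word: `w⁻¹L = {x | wx ∈ L}`. -/
def leftQuotient {α : Type*} (L : Set (List α)) (w : List α) : Set (List α) :=
  {x | w ++ x ∈ L}

/-- Atomic intersection `A_S = ⋂_{i ∈ S} K_i ∩ ⋂_{i ∉ S} K_iᶜ`. -/
def atomicInter {α : Type*} {n : ℕ} (K : Fin n → Set (List α)) (S : Set (Fin n)) :
    Set (List α) :=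
  (⋂ i ∈ S, K i) ∩ (⋂ i ∈ Sᶜ, (K i)ᶜ)

/-- A regular left ideal with `n` quotients has at most `2^(n-1) + 1` atoms. -/
theorem left_ideal_card_atoms {α : Type*} {n : ℕ} (hn : 0 < n)
    (L : Set (List α)) (K : Fin n → Set (List α))
    (hreg : Language.IsRegular L)
    (hL : (show Language α from L) = ⊤ * (show Language α from L))
    (hinj : Function.Injective K)
    (hq : ∀ i, ∃ w, K i = leftQuotient L w)
    (hall : ∀ w, ∃ i, leftQuotient L w = K i)
    (hK0 : K ⟨0, hn⟩ = L) :
    Set.ncard {S : Set (Fin n) | (atomicInter K S).Nonempty} ≤ 2 ^ (n - 1) + 1 := by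
  classical
  set i0 : Fin n := ⟨0, hn⟩
  -- L is contained in every quotient
  have hsub : ∀ i, L ⊆ K i := by
    intro i x hx
    obtain ⟨w, hw⟩ := hq i
    rw [hw]
    show w ++ x ∈ L
    have : (w ++ x) ∈ (⊤ * (show Language α from L) : Language α) :=
      ⟨w, trivial, x, hx, rfl⟩
    rwa [← hL] at this
  -- any nonempty atom is univ or misses i0
  have hkey : {S : Set (Fin n) | (atomicInter K S).Nonempty} ⊆
      insert Set.univ {S : Set (Fin n) | i0 ∉ S} := by
    intro S hS
    obtain ⟨x, hx1, hx2⟩ := hS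
    by_cases h0 : i0 ∈ S
    · left
      ext j
      simp only [Set.mem_univ, iff_true]
      by_contra hj
      have hxL : x ∈ L := by
        have := Set.mem_iInter₂.1 hx1 i0 h0
        rwa [hK0] at this
      have := Set.mem_iInter₂.1 hx2 j hj
      exact this (hsub j hxL)
    · right; exact h0
  have hfin : (insert Set.univ {S : Set (Fin n) | i0 ∉ S}).Finite :=
    Set.toFinite _
  calc Set.ncard {S : Set (Fin n) | (atomicInter K S).Nonempty}
      ≤ Set.ncard (insert Set.univ {S : Set (Fin n) | i0 ∉ S}) :=
        Set.ncard_le_ncard hkey hfin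
    _ ≤ Set.ncard {S : Set (Fin n) | i0 ∉ S} + 1 := Set.ncard_insert_le _ _
    _ ≤ 2 ^ (n - 1) + 1 := by
        gcongr
        have : {S : Set (Fin n) | i0 ∉ S}.ncard =
            Nat.card {S : Set (Fin n) // i0 ∉ S} := by
          rw [Set.ncard_eq_toFinset_card']
          simp [Set.toFinset_setOf, Nat.card_eq_fintype_card, Fintype.card_subtype]
        rw [this]
        have e : {S : Set (Fin n) // i0 ∉ S} ≃ Set {i : Fin n // i ≠ i0} :=
          { toFun := fun S => {i | i.1 ∈ S.1}
            invFun := fun T => ⟨{i | ∃ h : i ≠ i0, (⟨i, h⟩ : {i : Fin n // i ≠ i0}) ∈ T},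
              by simp⟩
            left_inv := by
              rintro ⟨S, hS⟩
              ext i
              simp only [Set.mem_setOf_eq]
              constructor
              · rintro ⟨h, hi⟩; exact hi
              · intro hi
                exact ⟨fun h => hS (h ▸ hi), hi⟩
            right_inv := by
              intro T
              ext ⟨i, hi⟩
              simp [hi] }
        rw [Nat.card_congr e, Nat.card_eq_fintype_card, Fintype.card_set]
        have : Fintype.card {i : Fin n // i ≠ i0} = n - 1 := by
          simp [Fintype.card_subtype_compl]
        rw [this]
end

section
/- A regular two-sided ideal with n quotients has at most 2^{n-2} + 1 atoms, for n ≥ 2. -/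
lemma aux_card {n : ℕ} (hn : 2 ≤ n) {z i₀ : Fin n} (hne : z ≠ i₀) :
    Set.ncard {S : Set (Fin n) | z ∉ S ∧ i₀ ∈ S} ≤ 2 ^ (n - 2) := by
  classical
  set C : Set (Fin n) := ({z, i₀} : Set (Fin n))ᶜ with hC
  have hCcard : Nat.card ↥C = n - 2 := by
    have h1 := Set.ncard_add_ncard_compl ({z, i₀} : Set (Fin n))
    rw [Set.ncard_pair hne] at h1
    have h2 : Nat.card (Fin n) = n := Nat.card_eq_fintype_card.trans (Fintype.card_fin n)
    have : Cᶜᶜ = C := compl_compl _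
    have h3 : C.ncard = n - 2 := by
      rw [hC]; omega
    rw [← h3]; exact (Nat.card_coe_set_eq _)
  let f : Set (Fin n) → Set ↥C := fun S => Subtype.val ⁻¹' S
  have hinj : Set.InjOn f {S | z ∉ S ∧ i₀ ∈ S} := by
    intro S hS S' hS' h
    ext x
    by_cases hx1 : x = z
    · subst hx1; simp [hS.1, hS'.1]
    by_cases hx2 : x = i₀
    · subst hx2; simp [hS.2, hS'.2]
    have hxC : x ∈ C := by simp [hC, hx1, hx2]
    have := Set.ext_iff.mp h ⟨x, hxC⟩
    simpa [f] using this
  calc Set.ncard {S : Set (Fin n) | z ∉ S ∧ i₀ ∈ S}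
      ≤ (Set.univ : Set (Set ↥C)).ncard :=
        Set.ncard_le_ncard_of_injOn f (fun _ _ => Set.mem_univ _) hinj (Set.toFinite _)
    _ = Nat.card (Set ↥C) := Set.ncard_univ _
    _ = 2 ^ (n - 2) := by
        haveI : Fintype ↥C := Fintype.ofFinite _
        rw [Nat.card_eq_fintype_card, Fintype.card_set, ← Nat.card_eq_fintype_card, hCcard]


/-- A regular two-sided ideal with `n ≥ 2` quotients has at most `2^(n-2) + 1` atoms. -/
theorem two_sided_ideal_card_atoms {α : Type*} {n : ℕ} (hn : 2 ≤ n)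
    (L : Set (List α)) (K : Fin n → Set (List α)) (i₀ : Fin n)
    (hreg : Language.IsRegular L)
    (hL : (show Language α from L) = ⊤ * (show Language α from L) * ⊤)
    (hinj : Function.Injective K)
    (hq : ∀ i, ∃ w, K i = leftQuotient L w)
    (hall : ∀ w, ∃ i, leftQuotient L w = K i)
    (hK0 : K ⟨0, by omega⟩ = L)
    (hi₀ : K i₀ = Set.univ) :
    Set.ncard {S : Set (Fin n) | (atomicInter K S).Nonempty} ≤ 2 ^ (n - 2) + 1 := by
  classical
  set z : Fin n := ⟨0, by omega⟩ with hz
  -- L ⊆ K i for all i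
  have hsub : ∀ i, L ⊆ K i := by
    intro i x hx
    obtain ⟨w, hw⟩ := hq i
    rw [hw]
    show w ++ x ∈ L
    have : w ++ x ∈ (⊤ * (show Language α from L) * ⊤ : Language α) := by
      have h1 : w ++ x ∈ (⊤ * (show Language α from L) : Language α) :=
        Language.append_mem_mul (Set.mem_univ w) hx
      have h2 := Language.append_mem_mul h1 (Set.mem_univ ([] : List α) : ([] : List α) ∈ (⊤ : Language α))
      rw [List.append_nil] at h2; exact h2
    rwa [← hL] at this
  -- i₀ ∈ S for nonempty atoms
  have hmem_i₀ : ∀ S : Set (Fin n), (atomicInter K S).Nonempty → i₀ ∈ S := by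
    intro S ⟨x, hx⟩
    by_contra h
    have : x ∈ (K i₀)ᶜ := by
      have := hx.2
      exact Set.mem_iInter₂.mp this i₀ h
    rw [hi₀] at this
    exact this (Set.mem_univ x)
  -- z ∈ S → S = univ for nonempty atoms
  have hzuniv : ∀ S : Set (Fin n), (atomicInter K S).Nonempty → z ∈ S → S = Set.univ := by
    intro S ⟨x, hx⟩ hzS
    have hxL : x ∈ L := by
      rw [← hK0]; exact Set.mem_iInter₂.mp hx.1 z hzS
    ext i
    simp only [Set.mem_univ, iff_true]
    by_contra h
    exact Set.mem_iInter₂.mp hx.2 i h (hsub i hxL)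
  by_cases hcase : z = i₀
  · -- all nonempty atoms are univ
    have : {S : Set (Fin n) | (atomicInter K S).Nonempty} ⊆ {Set.univ} := by
      intro S hS
      exact hzuniv S hS (hcase ▸ hmem_i₀ S hS)
    calc Set.ncard {S : Set (Fin n) | (atomicInter K S).Nonempty}
        ≤ ({Set.univ} : Set (Set (Fin n))).ncard :=
          Set.ncard_le_ncard this (Set.toFinite _)
      _ = 1 := Set.ncard_singleton _
      _ ≤ 2 ^ (n - 2) + 1 := Nat.le_add_left 1 _
  · have hsubset : {S : Set (Fin n) | (atomicInter K S).Nonempty} ⊆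
        insert Set.univ {S : Set (Fin n) | z ∉ S ∧ i₀ ∈ S} := by
      intro S hS
      by_cases hzS : z ∈ S
      · exact Or.inl (hzuniv S hS hzS)
      · exact Or.inr ⟨hzS, hmem_i₀ S hS⟩
    calc Set.ncard {S : Set (Fin n) | (atomicInter K S).Nonempty}
        ≤ (insert Set.univ {S : Set (Fin n) | z ∉ S ∧ i₀ ∈ S}).ncard :=
          Set.ncard_le_ncard hsubset (Set.toFinite _)
      _ ≤ Set.ncard {S : Set (Fin n) | z ∉ S ∧ i₀ ∈ S} + 1 := Set.ncard_insert_le _ _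
      _ ≤ 2 ^ (n - 2) + 1 := by
          have := aux_card hn hcase
          omega
end

section
/- If L is a left ideal with quotient complexity n, then its atom A_{Q_n} (intersection of all quotients) equals L, and hence has quotient complexity exactly n. -/
/-- If `L` is a left ideal with quotient complexity `n`, then the atom `A_{Q_n}`
(the intersection of all quotients) equals `L`, and hence has quotient
complexity exactly `n`. -/
theorem left_ideal_atom_univ {α : Type*} {n : ℕ} (hn : 0 < n)
    (L : Set (List α)) (K : Fin n → Set (List α))
    (hreg : Language.IsRegular L)
    (hL : (show Language α from L) = ⊤ * (show Language α from L))
    (hinj : Function.Injective K)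
    (hq : ∀ i, ∃ w, K i = leftQuotient L w)
    (hall : ∀ w, ∃ i, leftQuotient L w = K i)
    (hK0 : K ⟨0, hn⟩ = L) :
    (⋂ i, K i) = L ∧
      Set.ncard {M : Set (List α) | ∃ w, M = leftQuotient (⋂ i, K i) w} = n := by
  have hsub : ∀ w, L ⊆ leftQuotient L w := by
    intro w x hx
    show w ++ x ∈ L
    have h : (w ++ x) ∈ (⊤ * (show Language α from L) : Language α) :=
      Language.mem_mul.mpr ⟨w, trivial, x, hx, rfl⟩
    rw [← hL] at h; exact h
  have hInter : (⋂ i, K i) = L := by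
    apply subset_antisymm
    · intro x hx
      have h := Set.mem_iInter.mp hx ⟨0, hn⟩
      rwa [hK0] at h
    · intro x hx
      refine Set.mem_iInter.mpr fun i => ?_
      obtain ⟨w, hw⟩ := hq i
      rw [hw]; exact hsub w hx
  refine ⟨hInter, ?_⟩
  rw [hInter]
  have hset : {M : Set (List α) | ∃ w, M = leftQuotient L w} = Set.range K := by
    ext M
    constructor
    · rintro ⟨w, rfl⟩; obtain ⟨i, hi⟩ := hall w; exact ⟨i, hi.symm⟩
    · rintro ⟨i, rfl⟩; obtain ⟨w, hw⟩ := hq i; exact ⟨w, hw⟩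
  rw [hset]
  rw [← Set.image_univ, Set.ncard_image_of_injective _ hinj, Set.ncard_univ, Nat.card_eq_fintype_card, Fintype.card_fin]
end

section
/- In the atom DFA D_S of a minimal DFA D, a state (X,Y) with X ∩ Y = ∅ is a final state if and only if X ⊆ F and Y ∩ F = ∅; moreover for any letter a, the successor of (X,Y) is (Xa, Ya) if these images are disjoint, else the sink ⊥, and this transition function makes D_S a well-defined DFA recognizing the atomic intersection A_S. -/
open Classical in
/-- The atom DFA `D_S` of a DFA `D`: states are pairs of disjoint subsets of states
of `D` (represented as `some (X, Y)`) together with a sink `⊥` (represented as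
`none`); transitions apply the step function of `D` elementwise, going to the sink
when the images intersect. -/
noncomputable def atomDFA {α σ : Type*} (D : DFA α σ) (S : Set σ) :
    DFA α (Option (Set σ × Set σ)) where
  step st a :=
    match st with
    | none => none
    | some (X, Y) =>
        if Disjoint ((fun q => D.step q a) '' X) ((fun q => D.step q a) '' Y) then
          some ((fun q => D.step q a) '' X, (fun q => D.step q a) '' Y)
        else none
  start := some (S, Sᶜ)
  accept := {st | ∃ X Y, st = some (X, Y) ∧ X ⊆ D.accept ∧ Y ∩ D.accept = ∅}

lemma atomDFA_none_eval {α σ : Type*} (D : DFA α σ) (S : Set σ) (w : List α) :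
    (atomDFA D S).evalFrom none w = none := by
  induction w with
  | nil => rfl
  | cons a w ih => simpa [DFA.evalFrom, atomDFA] using ih

open Classical in
lemma atomDFA_eval {α σ : Type*} (D : DFA α σ) (S : Set σ) (w : List α)
    (X Y : Set σ) (h : Disjoint X Y) :
    (atomDFA D S).evalFrom (some (X, Y)) w =
      if Disjoint ((fun q => D.evalFrom q w) '' X) ((fun q => D.evalFrom q w) '' Y) then
        some ((fun q => D.evalFrom q w) '' X, (fun q => D.evalFrom q w) '' Y)
      else none := by
  induction w generalizing X Y with
  | nil =>
    simp only [DFA.evalFrom, List.foldl_nil, Set.image_id']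
    simp [h]
  | cons a w ih =>
    have hstep : (atomDFA D S).evalFrom (some (X, Y)) (a :: w) =
        (atomDFA D S).evalFrom ((atomDFA D S).step (some (X, Y)) a) w := rfl
    have himg : ∀ Z : Set σ, (fun q => D.evalFrom q (a :: w)) '' Z =
        (fun q => D.evalFrom q w) '' ((fun q => D.step q a) '' Z) := by
      intro Z
      rw [Set.image_image]
      rfl
    by_cases hd : Disjoint ((fun q => D.step q a) '' X) ((fun q => D.step q a) '' Y)
    · rw [hstep]
      have hs : (atomDFA D S).step (some (X, Y)) a =
          some ((fun q => D.step q a) '' X, (fun q => D.step q a) '' Y) := by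
        simp [atomDFA, hd]
      rw [hs, ih _ _ hd, himg X, himg Y]
    · have hsink : (atomDFA D S).step (some (X, Y)) a = none := by
        simp [atomDFA, hd]
      rw [hstep, hsink, atomDFA_none_eval]
      have hnd : ¬ Disjoint ((fun q => D.evalFrom q (a :: w)) '' X)
          ((fun q => D.evalFrom q (a :: w)) '' Y) := by
        rw [Set.not_disjoint_iff] at hd ⊢
        obtain ⟨r, hrX, hrY⟩ := hd
        refine ⟨D.evalFrom r w, ?_, ?_⟩ <;>
          · rw [himg]
            exact Set.mem_image_of_mem _ ‹_›
      rw [if_neg hnd]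

open Classical in
/-- In the atom DFA `D_S` of a minimal DFA `D`: a state `(X, Y)` with `X ∩ Y = ∅` is
final iff `X ⊆ F` and `Y ∩ F = ∅`; the successor of `(X, Y)` under a letter `a` is
`(Xa, Ya)` if these images are disjoint and the sink otherwise; and `D_S`
recognizes the atomic intersection `A_S`. -/
theorem atomDFA_spec {α σ : Type*} (D : DFA α σ)
    (hreach : ∀ q : σ, ∃ w : List α, D.evalFrom D.start w = q)
    (hdist : ∀ p q : σ,
      (∀ w : List α, D.evalFrom p w ∈ D.accept ↔ D.evalFrom q w ∈ D.accept) → p = q)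
    (S : Set σ) :
    (∀ X Y : Set σ, Disjoint X Y →
      (some (X, Y) ∈ (atomDFA D S).accept ↔ X ⊆ D.accept ∧ Y ∩ D.accept = ∅)) ∧
    (∀ (X Y : Set σ) (a : α),
      (atomDFA D S).step (some (X, Y)) a =
        if Disjoint ((fun q => D.step q a) '' X) ((fun q => D.step q a) '' Y) then
          some ((fun q => D.step q a) '' X, (fun q => D.step q a) '' Y)
        else none) ∧
    ((⋂ i ∈ S, {w : List α | D.evalFrom i w ∈ D.accept}) ∩
        (⋂ i ∈ Sᶜ, {w : List α | D.evalFrom i w ∈ D.accept}ᶜ) =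
      (atomDFA D S).accepts) := by
  have haccept : ∀ X Y : Set σ,
      (some (X, Y) ∈ (atomDFA D S).accept ↔ X ⊆ D.accept ∧ Y ∩ D.accept = ∅) := by
    intro X Y
    constructor
    · rintro ⟨X', Y', heq, h1, h2⟩
      obtain ⟨rfl, rfl⟩ : X = X' ∧ Y = Y' := by
        simpa [Prod.ext_iff] using heq
      exact ⟨h1, h2⟩
    · rintro ⟨h1, h2⟩
      exact ⟨X, Y, rfl, h1, h2⟩
  refine ⟨fun X Y _ => haccept X Y, fun X Y a => rfl, ?_⟩
  ext w
  have hdisj : Disjoint S Sᶜ := disjoint_compl_right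
  have hw : w ∈ (atomDFA D S).accepts ↔
      (atomDFA D S).evalFrom (some (S, Sᶜ)) w ∈ (atomDFA D S).accept := Iff.rfl
  change _ ↔ (atomDFA D S).evalFrom (some (S, Sᶜ)) w ∈ (atomDFA D S).accept
  rw [atomDFA_eval D S w S Sᶜ hdisj]
  by_cases hd : Disjoint ((fun q => D.evalFrom q w) '' S) ((fun q => D.evalFrom q w) '' Sᶜ)
  · simp only [hd, if_pos, haccept]
    simp only [Set.mem_inter_iff, Set.mem_iInter₂, Set.mem_setOf_eq, Set.mem_compl_iff]
    constructor
    · rintro ⟨h1, h2⟩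
      constructor
      · rintro q ⟨i, hi, rfl⟩
        exact h1 i hi
      · ext q
        simp only [Set.mem_inter_iff, Set.mem_empty_iff_false, iff_false, not_and]
        rintro ⟨i, hi, rfl⟩
        exact h2 i hi
    · rintro ⟨h1, h2⟩
      refine ⟨fun i hi => h1 (Set.mem_image_of_mem _ hi), fun i hi hmem => ?_⟩
      have : D.evalFrom i w ∈ ((fun q => D.evalFrom q w) '' Sᶜ) ∩ D.accept :=
        ⟨Set.mem_image_of_mem _ hi, hmem⟩
      rw [h2] at this
      exact this
  · simp only [hd, if_neg, not_false_iff]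
    simp only [Set.mem_inter_iff, Set.mem_iInter₂, Set.mem_setOf_eq, Set.mem_compl_iff]
    constructor
    · rintro ⟨h1, h2⟩
      rw [Set.not_disjoint_iff] at hd
      obtain ⟨r, ⟨i, hi, hir⟩, ⟨j, hj, hjr⟩⟩ := hd
      have hji : D.evalFrom j w = D.evalFrom i w := by
        simp only at hir hjr; rw [hjr, hir]
      exact absurd (hji ▸ h1 i hi) (h2 j hj)
    · rintro ⟨X', Y', heq, -, -⟩
      exact absurd heq (by simp)
end

section
/- In the atom DFA D_S, if the transition semigroup of the minimal DFA D contains, for every basis Z of an atom, a word w_Z mapping (Z, complement of Z) to a final state, then two states (X,Y) and (X',Y') with X ≠ X' are distinguishable whenever A_X and A_{X'} are both atoms. -/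
/-- The atomic intersection `A_Z` of a DFA `D`, where the language `K_q` of a state
`q` is `{w | δ(q, w) ∈ F}`: `A_Z = ⋂_{q ∈ Z} K_q ∩ ⋂_{q ∉ Z} K_qᶜ`. -/
def atomicInterD {α σ : Type*} (D : DFA α σ) (Z : Set σ) : Set (List α) :=
  (⋂ q ∈ Z, {w : List α | D.evalFrom q w ∈ D.accept}) ∩
    (⋂ q ∈ Zᶜ, {w : List α | D.evalFrom q w ∈ D.accept}ᶜ)

lemma atomDFA_eval_none {α σ : Type*} (D : DFA α σ) (S : Set σ) (u : List α) :
    (atomDFA D S).evalFrom none u = none := by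
  induction u with
  | nil => rfl
  | cons a u ih => exact ih

lemma atomDFA_eval_some {α σ : Type*} (D : DFA α σ) (S : Set σ) :
    ∀ (u : List α) (A B P Q : Set σ),
      (atomDFA D S).evalFrom (some (A, B)) u = some (P, Q) →
      P = (fun q => D.evalFrom q u) '' A ∧ Q = (fun q => D.evalFrom q u) '' B := by
  intro u
  induction u with
  | nil =>
      intro A B P Q h
      simp only [DFA.evalFrom, List.foldl_nil, Option.some.injEq, Prod.mk.injEq] at h
      simp [DFA.evalFrom, ← h.1, ← h.2]
  | cons a u ih =>
      intro A B P Q h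
      by_cases hd : Disjoint ((fun q => D.step q a) '' A) ((fun q => D.step q a) '' B)
      · have hstep : (atomDFA D S).step (some (A, B)) a
            = some ((fun q => D.step q a) '' A, (fun q => D.step q a) '' B) := by
          simp [atomDFA, hd]
        rw [show (atomDFA D S).evalFrom (some (A, B)) (a :: u)
              = (atomDFA D S).evalFrom ((atomDFA D S).step (some (A, B)) a) u from rfl,
            hstep] at h
        obtain ⟨h1, h2⟩ := ih _ _ _ _ h
        rw [h1, h2, Set.image_image, Set.image_image]
        exact ⟨rfl, rfl⟩
      · have hstep : (atomDFA D S).step (some (A, B)) a = none := by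
          simp [atomDFA, hd]
        rw [show (atomDFA D S).evalFrom (some (A, B)) (a :: u)
              = (atomDFA D S).evalFrom ((atomDFA D S).step (some (A, B)) a) u from rfl,
            hstep, atomDFA_eval_none] at h
        exact absurd h (by simp)

lemma atomDFA_eval_mono {α σ : Type*} (D : DFA α σ) (S : Set σ) :
    ∀ (u : List α) (A B A' B' : Set σ), A' ⊆ A → B' ⊆ B →
      (atomDFA D S).evalFrom (some (A, B)) u ≠ none →
      (atomDFA D S).evalFrom (some (A', B')) u ≠ none := by
  intro u
  induction u with
  | nil => intro A B A' B' _ _ _; simp [DFA.evalFrom]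
  | cons a u ih =>
      intro A B A' B' hA hB h
      by_cases hd : Disjoint ((fun q => D.step q a) '' A) ((fun q => D.step q a) '' B)
      · have hd' : Disjoint ((fun q => D.step q a) '' A') ((fun q => D.step q a) '' B') :=
          hd.mono (Set.image_mono hA) (Set.image_mono hB)
        have hstep : (atomDFA D S).step (some (A, B)) a
            = some ((fun q => D.step q a) '' A, (fun q => D.step q a) '' B) := by
          simp [atomDFA, hd]
        have hstep' : (atomDFA D S).step (some (A', B')) a
            = some ((fun q => D.step q a) '' A', (fun q => D.step q a) '' B') := by
          simp [atomDFA, hd']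
        rw [show (atomDFA D S).evalFrom (some (A, B)) (a :: u)
              = (atomDFA D S).evalFrom ((atomDFA D S).step (some (A, B)) a) u from rfl,
            hstep] at h
        rw [show (atomDFA D S).evalFrom (some (A', B')) (a :: u)
              = (atomDFA D S).evalFrom ((atomDFA D S).step (some (A', B')) a) u from rfl,
            hstep']
        exact ih _ _ _ _ (Set.image_mono hA) (Set.image_mono hB) h
      · have hstep : (atomDFA D S).step (some (A, B)) a = none := by
          simp [atomDFA, hd]
        rw [show (atomDFA D S).evalFrom (some (A, B)) (a :: u)
              = (atomDFA D S).evalFrom ((atomDFA D S).step (some (A, B)) a) u from rfl,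
            hstep, atomDFA_eval_none] at h
        exact absurd rfl h

lemma atomDFA_key {α σ : Type*} (D : DFA α σ) (S Z : Set σ) (u : List α)
    (hu : (atomDFA D S).evalFrom (some (Z, Zᶜ)) u ∈ (atomDFA D S).accept) :
    ∀ q, D.evalFrom q u ∈ D.accept ↔ q ∈ Z := by
  obtain ⟨P, Q, heq, hP, hQ⟩ := hu
  obtain ⟨h1, h2⟩ := atomDFA_eval_some D S u Z Zᶜ P Q heq
  intro q
  constructor
  · intro hf
    by_contra hq
    have hmem : D.evalFrom q u ∈ Q := h2 ▸ ⟨q, hq, rfl⟩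
    have : D.evalFrom q u ∈ Q ∩ D.accept := ⟨hmem, hf⟩
    simp [hQ] at this
  · intro hq
    exact hP (h1 ▸ ⟨q, hq, rfl⟩)

lemma atomDFA_accept_of_subset {α σ : Type*} (D : DFA α σ) (S Z : Set σ) (u : List α)
    (hu : (atomDFA D S).evalFrom (some (Z, Zᶜ)) u ∈ (atomDFA D S).accept)
    (A B : Set σ) (hA : A ⊆ Z) (hB : B ⊆ Zᶜ) :
    (atomDFA D S).evalFrom (some (A, B)) u ∈ (atomDFA D S).accept := by
  have hkey := atomDFA_key D S Z u hu
  have hne : (atomDFA D S).evalFrom (some (Z, Zᶜ)) u ≠ none := by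
    obtain ⟨P, Q, heq, -, -⟩ := hu
    rw [heq]; simp
  have hne' := atomDFA_eval_mono D S u Z Zᶜ A B hA hB hne
  obtain ⟨st, hst⟩ := Option.ne_none_iff_exists'.mp hne'
  obtain ⟨P, Q⟩ := st
  obtain ⟨h1, h2⟩ := atomDFA_eval_some D S u A B P Q hst
  refine ⟨P, Q, hst, ?_, ?_⟩
  · rintro x hx
    rw [h1] at hx
    obtain ⟨q, hq, rfl⟩ := hx
    exact (hkey q).mpr (hA hq)
  · ext x
    simp only [Set.mem_inter_iff, Set.mem_empty_iff_false, iff_false, not_and]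
    intro hx
    rw [h2] at hx
    obtain ⟨q, hq, rfl⟩ := hx
    intro hf
    exact (hB hq) ((hkey q).mp hf)

lemma atomDFA_not_accept {α σ : Type*} (D : DFA α σ) (S Z : Set σ) (u : List α)
    (hkey : ∀ q, D.evalFrom q u ∈ D.accept ↔ q ∈ Z)
    (A B : Set σ) (q : σ) (hq : q ∈ A) (hqZ : q ∉ Z) :
    (atomDFA D S).evalFrom (some (A, B)) u ∉ (atomDFA D S).accept := by
  rintro ⟨P, Q, heq, hP, hQ⟩
  obtain ⟨h1, h2⟩ := atomDFA_eval_some D S u A B P Q heq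
  have : D.evalFrom q u ∈ P := h1 ▸ ⟨q, hq, rfl⟩
  exact hqZ ((hkey q).mp (hP this))

/-- Distinguishability in the atom DFA: if for every basis `Z` of an atom there is
a word mapping the initial state `(Z, Zᶜ)` of `D_Z` to a final state, then two
states `(X, Y)` and `(X', Y')` with `X ≠ X'` are distinguishable whenever `A_X`
and `A_{X'}` are both atoms. -/
theorem atomDFA_distinguishable {α σ : Type*} (D : DFA α σ)
    (hreach : ∀ q : σ, ∃ w : List α, D.evalFrom D.start w = q)
    (hdist : ∀ p q : σ,
      (∀ w : List α, D.evalFrom p w ∈ D.accept ↔ D.evalFrom q w ∈ D.accept) → p = q)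
    (hw : ∀ Z : Set σ, (atomicInterD D Z).Nonempty →
      ∃ w : List α,
        (atomDFA D Z).evalFrom (atomDFA D Z).start w ∈ (atomDFA D Z).accept)
    (S : Set σ) (X Y X' Y' : Set σ)
    (hXY : Disjoint X Y) (hX'Y' : Disjoint X' Y') (hne : X ≠ X')
    (hX : (atomicInterD D X).Nonempty) (hX' : (atomicInterD D X').Nonempty) :
    ∃ w : List α,
      ¬((atomDFA D S).evalFrom (some (X, Y)) w ∈ (atomDFA D S).accept ↔
        (atomDFA D S).evalFrom (some (X', Y')) w ∈ (atomDFA D S).accept) := by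
  have hYc : Y ⊆ Xᶜ := fun x hx => Set.disjoint_right.mp hXY hx
  have hY'c : Y' ⊆ X'ᶜ := fun x hx => Set.disjoint_right.mp hX'Y' hx
  obtain ⟨u, hu⟩ := hw X hX
  obtain ⟨u', hu'⟩ := hw X' hX'
  have hu2 : (atomDFA D S).evalFrom (some (X, Xᶜ)) u ∈ (atomDFA D S).accept := hu
  have hu2' : (atomDFA D S).evalFrom (some (X', X'ᶜ)) u' ∈ (atomDFA D S).accept := hu'
  by_cases hsub : X ⊆ X'
  · -- X ⊊ X', so ∃ q ∈ X' \ X; use u (the word for X)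
    have : ¬ X' ⊆ X := fun h => hne (le_antisymm hsub h)
    obtain ⟨q, hq, hqX⟩ := Set.not_subset.mp this
    refine ⟨u, fun h => ?_⟩
    have hacc := atomDFA_accept_of_subset D S X u hu2 X Y subset_rfl hYc
    exact atomDFA_not_accept D S X u (atomDFA_key D S X u hu2) X' Y' q hq hqX (h.mp hacc)
  · -- ∃ q ∈ X \ X'; use u' (the word for X')
    obtain ⟨q, hq, hqX'⟩ := Set.not_subset.mp hsub
    refine ⟨u', fun h => ?_⟩
    have hacc := atomDFA_accept_of_subset D S X' u' hu2' X' Y' subset_rfl hY'c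
    exact atomDFA_not_accept D S X' u' (atomDFA_key D S X' u' hu2') X Y q hq hqX' (h.mpr hacc)
end
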